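/- For the Cauchy kernel k_w(z) = 1/(1 - conj(w)·z) on the unit disk and a point ζ in the open unit disk, the local Dirichlet integral D_ζ(k_w) := (1/2π) ∫_{|λ|=1} |(k_w(λ) - k_w(ζ))/(λ - ζ)|² |dλ| equals |w|² / (|1 - conj(w)·ζ|² · (1 - |w|²)). -/

import Mathlib

open Complex Metric Real

lemma aux_one_sub_ne {a z : ℂ} (ha : ‖a‖ < 1) (hz : ‖z‖ ≤ 1) : 1 - a * z ≠ 0 := by
  intro h
  have h1 : a * z = 1 := by linear_combination -h
  have : ‖a * z‖ < 1 := by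
    calc ‖a * z‖ = ‖a‖ * ‖z‖ := norm_mul a z
    _ ≤ ‖a‖ * 1 := by nlinarith [norm_nonneg a]
    _ < 1 := by simpa using ha
  rw [h1, norm_one] at this
  exact lt_irrefl 1 this

lemma key_integral (a : ℂ) (ha : ‖a‖ < 1) :
    ∫ θ in (0:ℝ)..(2*π), ‖(1 - a * circleMap 0 1 θ)⁻¹‖ ^ 2 = 2 * π / (1 - ‖a‖ ^ 2) := by
  have hdc : DiffContOnCl ℂ (fun z => (1 - a * z)⁻¹) (ball (0:ℂ) 1) := by
    apply DifferentiableOn.diffContOnCl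
    intro z hz
    have hz' : ‖z‖ ≤ 1 := by
      have := closure_ball (0:ℂ) one_ne_zero
      rw [this, mem_closedBall, dist_zero_right] at hz
      exact hz
    exact (((differentiableAt_const (1:ℂ)).sub
      ((differentiableAt_const a).mul differentiableAt_id)).inv
      (aux_one_sub_ne ha hz')).differentiableWithinAt
  have haconj : ‖(starRingEnd ℂ) a‖ < 1 := by rwa [RCLike.norm_conj]
  have hmem : (starRingEnd ℂ) a ∈ ball (0:ℂ) 1 := by
    rwa [mem_ball, dist_zero_right]
  have hCI := hdc.circleIntegral_sub_inv_smul hmem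
  rw [circleIntegral] at hCI
  -- pointwise rewrite of the integrand
  have hpt : ∀ θ : ℝ, deriv (circleMap 0 1) θ •
      ((circleMap 0 1 θ - (starRingEnd ℂ) a)⁻¹ • (1 - a * circleMap 0 1 θ)⁻¹)
      = I * ((‖(1 - a * circleMap 0 1 θ)⁻¹‖ ^ 2 : ℝ) : ℂ) := by
    intro θ
    set lam := circleMap 0 1 θ with hlam
    have hnorm : ‖lam‖ = 1 := by
      simp [hlam, norm_circleMap_zero]
    have hlam0 : lam ≠ 0 := by
      intro h; rw [h, norm_zero] at hnorm; norm_num at hnorm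
    have hconjlam : (starRingEnd ℂ) lam = lam⁻¹ := by
      have h1 : lam * (starRingEnd ℂ) lam = 1 := by
        rw [Complex.mul_conj]
        norm_cast
        rw [Complex.normSq_eq_norm_sq, hnorm]; norm_num
      exact eq_inv_of_mul_eq_one_left (by linear_combination h1)
    have hsub : lam - (starRingEnd ℂ) a ≠ 0 := by
      intro h
      have : lam = (starRingEnd ℂ) a := by linear_combination h
      rw [this] at hnorm
      rw [hnorm] at haconj
      exact lt_irrefl 1 haconj
    have hden : 1 - a * lam ≠ 0 := aux_one_sub_ne ha (le_of_eq hnorm)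
    have hcast : ((‖(1 - a * lam)⁻¹‖ ^ 2 : ℝ) : ℂ)
        = (1 - a * lam)⁻¹ * (starRingEnd ℂ) ((1 - a * lam)⁻¹) := by
      rw [Complex.mul_conj]
      norm_cast
      rw [Complex.normSq_eq_norm_sq]
    rw [deriv_circleMap, ← hlam, smul_eq_mul, smul_eq_mul, hcast]
    have hconjexp : (starRingEnd ℂ) ((1 - a * lam)⁻¹)
        = (1 - (starRingEnd ℂ) a * lam⁻¹)⁻¹ := by
      rw [map_inv₀]
      congr 1
      rw [map_sub, map_one, map_mul, hconjlam]
    rw [hconjexp]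
    have hden2 : 1 - (starRingEnd ℂ) a * lam⁻¹ ≠ 0 := by
      intro h
      apply hsub
      have := congrArg (fun z => z * lam) h
      simp only [sub_mul, one_mul, zero_mul] at this
      rw [mul_assoc, inv_mul_cancel₀ hlam0, mul_one] at this
      exact this
    field_simp
  rw [intervalIntegral.integral_congr (fun θ _ => hpt θ)] at hCI
  rw [intervalIntegral.integral_const_mul, intervalIntegral.integral_ofReal] at hCI
  have hsmul : (2 * ↑π * I : ℂ) • (1 - a * (starRingEnd ℂ) a)⁻¹
      = I * ((2 * π / (1 - ‖a‖ ^ 2) : ℝ) : ℂ) := by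
    rw [smul_eq_mul]
    have : (1 : ℂ) - a * (starRingEnd ℂ) a = ((1 - ‖a‖ ^ 2 : ℝ) : ℂ) := by
      rw [Complex.mul_conj, Complex.normSq_eq_norm_sq]
      push_cast
      ring
    rw [this]
    push_cast
    ring
  rw [hsmul] at hCI
  have := mul_left_cancel₀ I_ne_zero hCI
  exact_mod_cast this

/-- For the Cauchy kernel `k_w(z) = 1/(1 - conj w · z)` and `ζ ∈ 𝔻`, the local Dirichlet
integral `D_ζ(k_w) = (1/2π) ∫_𝕋 |(k_w(λ) - k_w(ζ))/(λ - ζ)|² |dλ|` equals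
`|w|² / (|1 - conj w · ζ|² (1 - |w|²))`. -/
theorem stmt_0 (w ζ : ℂ) (hw : w ∈ ball (0 : ℂ) 1) (hζ : ζ ∈ ball (0 : ℂ) 1) :
    (1 / (2 * π)) * ∫ θ in (0 : ℝ)..(2 * π),
        ‖((1 - (starRingEnd ℂ) w * circleMap 0 1 θ)⁻¹ - (1 - (starRingEnd ℂ) w * ζ)⁻¹) /
            (circleMap 0 1 θ - ζ)‖ ^ 2
      = ‖w‖ ^ 2 / (‖1 - (starRingEnd ℂ) w * ζ‖ ^ 2 * (1 - ‖w‖ ^ 2)) := by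
  rw [mem_ball, dist_zero_right] at hw hζ
  set a := (starRingEnd ℂ) w with ha
  have hanorm : ‖a‖ < 1 := by rw [ha, RCLike.norm_conj]; exact hw
  have hdenζ : 1 - a * ζ ≠ 0 := aux_one_sub_ne hanorm (le_of_lt hζ)
  -- pointwise identity
  have hpt : ∀ θ : ℝ, ‖((1 - a * circleMap 0 1 θ)⁻¹ - (1 - a * ζ)⁻¹) /
      (circleMap 0 1 θ - ζ)‖ ^ 2
      = (‖w‖ ^ 2 / ‖1 - a * ζ‖ ^ 2) * ‖(1 - a * circleMap 0 1 θ)⁻¹‖ ^ 2 := by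
    intro θ
    set lam := circleMap 0 1 θ with hlam
    have hnorm : ‖lam‖ = 1 := by
      simp [hlam, norm_circleMap_zero]
    have hdenl : 1 - a * lam ≠ 0 := aux_one_sub_ne hanorm (le_of_eq hnorm)
    have hlz : lam - ζ ≠ 0 := by
      intro h
      have : lam = ζ := by linear_combination h
      rw [this] at hnorm
      rw [hnorm] at hζ
      exact lt_irrefl 1 hζ
    have hid : ((1 - a * lam)⁻¹ - (1 - a * ζ)⁻¹) / (lam - ζ)
        = a * ((1 - a * lam)⁻¹ * (1 - a * ζ)⁻¹) := by
      field_simp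
      ring
    rw [hid]
    simp only [norm_mul, norm_inv, mul_pow, inv_pow, ha, RCLike.norm_conj]
    ring
  rw [intervalIntegral.integral_congr (fun θ _ => hpt θ),
    intervalIntegral.integral_const_mul, key_integral a hanorm]
  rw [ha, RCLike.norm_conj] at *
  have hπ : (π : ℝ) ≠ 0 := Real.pi_ne_zero
  have h1 : (1 : ℝ) - ‖w‖ ^ 2 ≠ 0 := by nlinarith [norm_nonneg w]
  have h2 : ‖1 - (starRingEnd ℂ) w * ζ‖ ≠ 0 := norm_ne_zero_iff.mpr hdenζ
  field_simp
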